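/- Let F be a family of distinct finite sets over a finite domain D, each of cardinality at least 2, and let H(F, D) be the associated directed hypergraph. For S ∈ F, a vertex v is reachable from v[S] in H(F, D) if and only if v = v[S'] for some S' ∈ F with S' ⊆ S, or v = v[x] for some x ∈ S. -/
import Mathlib


/-- Reachability in a directed hypergraph whose hyperarc set is `A`. -/
inductive HReach {V : Type*} (A : Set (Set V × Set V)) : V → V → Prop
  | refl (u : V) : HReach A u u
  | step {u v : V} (T Hd : Set V) (ha : (T, Hd) ∈ A) (hv : v ∈ Hd)
      (hT : ∀ t ∈ T, HReach A u t) : HReach A u v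

/-- Arcs of the directed graph `graph(H)` generated by simple hyperarcs. -/
def graphArcs {V : Type*} (A : Set (Set V × Set V)) : Set (V × V) :=
  {p | ∃ Hd : Set V, ({p.1}, Hd) ∈ A ∧ p.2 ∈ Hd}

/-- Reachability in the directed graph `graph(H)`. -/
def GReach {V : Type*} (A : Set (Set V × Set V)) : V → V → Prop :=
  Relation.ReflTransGen (fun u v => (u, v) ∈ graphArcs A)

/-- `C` is a strongly connected component of the relation `R`. -/
def IsSCC {V : Type*} (R : V → V → Prop) (C : Set V) : Prop :=
  ∃ u : V, C = {v | R u v ∧ R v u}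

/-- `C` is a terminal strongly connected component of `R`. -/
def IsTerminalSCC {V : Type*} (R : V → V → Prop) (C : Set V) : Prop :=
  IsSCC R C ∧ ∀ u ∈ C, ∀ v, R u v → v ∈ C

/-- The hypergraph `H(F, D)` associated to a family `F` of subsets of the
domain `α`: `Sum.inl x` is the vertex `v[x]` and `Sum.inr S` is the vertex
`v[S]`; each `S ∈ F` yields the hyperarcs `a[S]` and `a'[S]`. -/
def HFD {α : Type*} (F : Set (Set α)) : Set (Set (α ⊕ Set α) × Set (α ⊕ Set α)) :=
  {p | ∃ S ∈ F, p = ({Sum.inr S}, Sum.inl '' S) ∨ p = (Sum.inl '' S, {Sum.inr S})}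

theorem reach_from_vS_iff {α : Type*} [Fintype α] (F : Set (Set α))
    (hcard : ∀ S ∈ F, 2 ≤ S.ncard)
    (S : Set α) (hS : S ∈ F) (v : α ⊕ Set α) :
    HReach (HFD F) (Sum.inr S) v ↔
      (∃ S' ∈ F, S' ⊆ S ∧ v = Sum.inr S') ∨ (∃ x ∈ S, v = Sum.inl x) := by
  constructor
  · intro h
    induction h with
    | refl => exact Or.inl ⟨S, hS, subset_rfl, rfl⟩
    | step T Hd ha hv hT ih =>
      obtain ⟨S'', hS'', hcase⟩ := ha
      rcases hcase with h1 | h1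
      · obtain ⟨hT1, hHd⟩ := Prod.mk.injEq .. ▸ h1
        subst hT1; subst hHd
        rcases hv with ⟨x, hx, rfl⟩
        rcases ih _ rfl with (⟨S', _, hsub, heq⟩ | ⟨y, _, heq⟩)
        · rw [Sum.inr.injEq] at heq; subst heq
          exact Or.inr ⟨x, hsub hx, rfl⟩
        · exact absurd heq (by simp)
      · obtain ⟨hT1, hHd⟩ := Prod.mk.injEq .. ▸ h1
        subst hT1; subst hHd
        rcases hv with rfl
        refine Or.inl ⟨S'', hS'', ?_, rfl⟩
        intro x hx
        rcases ih _ ⟨x, hx, rfl⟩ with (⟨S', _, _, heq⟩ | ⟨y, hy, heq⟩)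
        · exact absurd heq (by simp)
        · rw [Sum.inl.injEq] at heq; subst heq; exact hy
  · rintro (⟨S', hS', hsub, rfl⟩ | ⟨x, hx, rfl⟩)
    · refine HReach.step (Sum.inl '' S') {Sum.inr S'} ⟨S', hS', Or.inr rfl⟩ rfl ?_
      rintro t ⟨x, hx, rfl⟩
      exact HReach.step {Sum.inr S} (Sum.inl '' S) ⟨S, hS, Or.inl rfl⟩
        ⟨x, hsub hx, rfl⟩ (fun t ht => ht ▸ HReach.refl _)
    · exact HReach.step {Sum.inr S} (Sum.inl '' S) ⟨S, hS, Or.inl rfl⟩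
        ⟨x, hx, rfl⟩ (fun t ht => ht ▸ HReach.refl _)
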